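/- Every route l in the expanded topological family Ω_f (i.e., every feasible route whose consecutive-visit order is consistent with β^f) corresponds to at least one source-to-sink path in G^f whose edge costs sum to c_l; thus the map from source-sink paths of G^f to Ω_f is surjective. -/

import Mathlib

/-- Edges of the expanded topological family graph `G^f` for CVRP. -/
def gEdge {N : Type*} (d : N → ℕ) (d0 : ℕ) (β : N → ℕ) :
    ((N × ℕ) ⊕ Bool) → ((N × ℕ) ⊕ Bool) → Prop
  | Sum.inr false, Sum.inl (u, a) => a + d u = d0
  | Sum.inl (u, a), Sum.inl (v, b) => β u < β v ∧ b + d v = a ∧ a + d u ≤ d0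
  | Sum.inl (u, a), Sum.inr true => a + d u ≤ d0
  | _, _ => False

/-- Edge costs in `G^f`. -/
def gCost {N : Type*} (cOut cIn : N → ℝ) (cMid : N → N → ℝ) :
    ((N × ℕ) ⊕ Bool) → ((N × ℕ) ⊕ Bool) → ℝ
  | Sum.inr _, Sum.inl (u, _) => cOut u
  | Sum.inl (u, _), Sum.inl (v, _) => cMid u v
  | Sum.inl (u, _), Sum.inr _ => cIn u
  | _, _ => 0

/-- Total edge cost along a list of vertices. -/
def pathCost {N : Type*} (cOut cIn : N → ℝ) (cMid : N → N → ℝ)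
    (vs : List ((N × ℕ) ⊕ Bool)) : ℝ :=
  ((vs.zip vs.tail).map (fun e => gCost cOut cIn cMid e.1 e.2)).sum

/-- Build the capacity-annotated sequence of vertices. -/
def mkSeq {N : Type*} (d : N → ℕ) : ℕ → List N → List (N × ℕ)
  | _, [] => []
  | a, u :: us => (u, a - d u) :: mkSeq d (a - d u) us

lemma mkSeq_fst {N : Type*} (d : N → ℕ) :
    ∀ (r : List N) (a : ℕ), (mkSeq d a r).map Prod.fst = r := by
  intro r
  induction r with
  | nil => intro a; simp [mkSeq]
  | cons u us ih => intro a; simp [mkSeq, ih]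

lemma chainAux {N : Type*} (d : N → ℕ) (d0 : ℕ) (β : N → ℕ) :
    ∀ (r : List N) (a : ℕ), (r.map d).sum ≤ a → a ≤ d0 →
      r.Chain' (fun u v => β u < β v) →
      List.Chain' (gEdge d d0 β)
        (((mkSeq d a r).map Sum.inl ++ [Sum.inr true] : List ((N × ℕ) ⊕ Bool))) := by
  intro r
  induction r with
  | nil => intro a _ _ _; simp [mkSeq]; exact List.isChain_singleton _
  | cons u us ih =>
    intro a hsum ha hch
    cases us with
    | nil =>
      simp only [mkSeq, List.map_cons, List.map_nil, List.nil_append, List.cons_append]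
      refine List.isChain_cons_cons.mpr ⟨?_, by simp⟩
      show (a - d u) + d u ≤ d0
      simp [List.map, List.sum_cons] at hsum
      omega
    | cons v us' =>
      simp only [List.map_cons, List.sum_cons] at hsum
      have hch' : (v :: us').Chain' (fun u v => β u < β v) := hch.tail
      have hβuv : β u < β v := (List.isChain_cons_cons.mp hch).1
      have hs2 : (List.map d (v :: us')).sum = d v + (List.map d us').sum := by simp
      have hrest := ih (a - d u) (by omega) (by omega) hch'
      simp only [mkSeq, List.map_cons, List.cons_append] at hrest ⊢
      refine List.isChain_cons_cons.mpr ⟨?_, hrest⟩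
      show β u < β v ∧ ((a - d u) - d v) + d v = a - d u ∧ (a - d u) + d u ≤ d0
      exact ⟨hβuv, by omega, by omega⟩

lemma pathCost_cons₂ {N : Type*} (cOut cIn : N → ℝ) (cMid : N → N → ℝ)
    (x y : (N × ℕ) ⊕ Bool) (l : List ((N × ℕ) ⊕ Bool)) :
    pathCost cOut cIn cMid (x :: y :: l)
      = gCost cOut cIn cMid x y + pathCost cOut cIn cMid (y :: l) := by
  simp [pathCost]

lemma costAux {N : Type*} (cOut cIn : N → ℝ) (cMid : N → N → ℝ) :
    ∀ (seq : List (N × ℕ)) (u : N) (a : ℕ),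
      pathCost cOut cIn cMid
          (Sum.inl (u, a) :: (seq.map Sum.inl ++ [Sum.inr true]))
        = (((u :: seq.map Prod.fst).zip (seq.map Prod.fst)).map
              (fun e => cMid e.1 e.2)).sum
          + cIn ((u :: seq.map Prod.fst).getLast (by simp)) := by
  intro seq
  induction seq with
  | nil =>
    intro u a
    simp [pathCost, gCost]
  | cons p seq' ih =>
    intro u a
    obtain ⟨v, b⟩ := p
    simp only [List.map_cons, List.cons_append]
    rw [pathCost_cons₂]
    rw [ih v b]
    simp only [List.zip_cons_cons, List.map_cons, List.sum_cons]
    have : gCost cOut cIn cMid (Sum.inl (u, a)) (Sum.inl (v, b)) = cMid u v := rfl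
    rw [this]
    have hlast : (u :: v :: (seq'.map Prod.fst)).getLast (by simp)
        = (v :: (seq'.map Prod.fst)).getLast (by simp) := by
      exact List.getLast_cons (by simp)
    rw [hlast]
    ring

/-- Every route of the expanded topological family `Ω_f` — i.e. every feasible route
whose consecutive-visit order is consistent with `β^f` — is realized by at least one
source-to-sink path of `G^f` whose edge costs sum to the cost of the route; hence the
map from source-to-sink paths of `G^f` to `Ω_f` is surjective. -/
theorem gg_family_paths_surject_onto_family
    {N : Type*} [DecidableEq N]
    (d : N → ℕ) (d0 : ℕ) (β : N → ℕ) (hβ : Function.Injective β)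
    (cOut cIn : N → ℝ) (cMid : N → N → ℝ)
    (r : List N) (hne : r ≠ []) (hnodup : r.Nodup)
    (hdem : (r.map d).sum ≤ d0)
    (horder : r.Chain' (fun u v => β u < β v)) :
    ∃ seq : List (N × ℕ), ∃ hseq : seq ≠ [],
      (Sum.inr false :: (seq.map Sum.inl ++ [Sum.inr true]) :
        List ((N × ℕ) ⊕ Bool)).Chain' (gEdge d d0 β) ∧
      seq.map Prod.fst = r ∧
      pathCost cOut cIn cMid
          (Sum.inr false :: (seq.map Sum.inl ++ [Sum.inr true]))
        = cOut (r.head hne)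
          + ((r.zip r.tail).map (fun e => cMid e.1 e.2)).sum
          + cIn (r.getLast hne) := by
  obtain ⟨u, us, rfl⟩ := List.exists_cons_of_ne_nil hne
  refine ⟨mkSeq d d0 (u :: us), by simp [mkSeq], ?_, mkSeq_fst d _ _, ?_⟩
  · refine List.isChain_cons_cons.mpr ?_
    have hdu : d u ≤ d0 := by
      simp only [List.map_cons, List.sum_cons] at hdem; omega
    constructor
    · show (d0 - d u) + d u = d0
      omega
    · simpa [mkSeq, List.Chain'] using chainAux d d0 β (u :: us) d0 hdem le_rfl horder
  · simp only [mkSeq, List.map_cons, List.cons_append]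
    rw [pathCost_cons₂, costAux]
    have : gCost cOut cIn cMid (Sum.inr false) (Sum.inl (u, d0 - d u)) = cOut u := rfl
    rw [this, mkSeq_fst]
    simp only [List.head_cons]
    have : (u :: us).tail = us := rfl
    rw [this]
    have : (u :: us).getLast hne = (u :: us).getLast (by simp) := rfl
    ring
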